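/- arXiv:2203.09555 — 6 statements merged into one kernel-verified Lean document; each statement's English description precedes it below -/
import Mathlib

section
/- For every MPNN T of type d → r there is an equivalent tuple (e_1, …, e_r) of MPLang expressions appropriate for input arity d, i.e., (e_1(G)(χ)(v), …, e_r(G)(χ)(v)) = T(G)(χ)(v) for every graph G, every d-dimensional feature map χ on G, and every node v; moreover, the function applications occurring in the expressions apply only activation functions used in layers of T. -/
open scoped BigOperators

/-- A finite graph: nodes `Fin n`, with a symmetric, irreflexive adjacency relation. -/
structure MPGraph where
  n : ℕ
  adj : Fin n → Fin n → Bool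
  symm : ∀ u v, adj u v = adj v u
  irrefl : ∀ v, adj v v = false

namespace MPGraph

/-- The set of neighbors of `v` in `G`. -/
def neighbors (G : MPGraph) (v : Fin G.n) : Finset (Fin G.n) :=
  Finset.univ.filter fun u => G.adj v u

/-- The degree of a node. -/
def degree (G : MPGraph) (v : Fin G.n) : ℕ := (G.neighbors v).card

/-- `G` has degree at most `p` (i.e., `G ∈ 𝔾_p`). -/
def DegreeLE (G : MPGraph) (p : ℕ) : Prop := ∀ v, G.degree v ≤ p

end MPGraph

/-- The rectified linear unit. -/
noncomputable def ReLU (x : ℝ) : ℝ := max 0 x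

/-- An MPNN layer of type `d → r`: matrices `W₁, W₂ ∈ ℝ^{r×d}`, bias `b ∈ ℝ^r`,
and a continuous activation function `σ`. -/
structure Layer (d r : ℕ) where
  W₁ : Matrix (Fin r) (Fin d) ℝ
  W₂ : Matrix (Fin r) (Fin d) ℝ
  b : Fin r → ℝ
  σ : ℝ → ℝ
  hσ : Continuous σ

namespace Layer

/-- The GFMT defined by a layer:
`L(G)(χ)(v) = σ(W₁ χ(v) + W₂ Σ_{u ∈ N_G(v)} χ(u) + b)`, componentwise. -/
noncomputable def eval {d r : ℕ} (L : Layer d r) (G : MPGraph)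
    (χ : Fin G.n → Fin d → ℝ) (v : Fin G.n) : Fin r → ℝ :=
  fun i => L.σ (L.W₁.mulVec (χ v) i + L.W₂.mulVec (∑ u ∈ G.neighbors v, χ u) i + L.b i)

end Layer

/-- An MPNN: a nonempty sequence of layers with matching arities. -/
inductive MPNN : ℕ → ℕ → Type where
  | single {d r : ℕ} : Layer d r → MPNN d r
  | cons {d m r : ℕ} : Layer d m → MPNN m r → MPNN d r

namespace MPNN

/-- The GFMT defined by an MPNN: the sequential composition of its layers. -/
noncomputable def eval : {d r : ℕ} → MPNN d r → (G : MPGraph) →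
    (Fin G.n → Fin d → ℝ) → (Fin G.n → Fin r → ℝ)
  | _, _, .single L, G, χ => L.eval G χ
  | _, _, .cons L N, G, χ => N.eval G (L.eval G χ)

/-- A ReLU-MPNN: every layer uses ReLU, except that the last layer may use the identity. -/
def IsReLU : {d r : ℕ} → MPNN d r → Prop
  | _, _, .single L => L.σ = ReLU ∨ L.σ = id
  | _, _, .cons L N => L.σ = ReLU ∧ N.IsReLU

/-- The set of activation functions used in the layers of an MPNN. -/
def activations : {d r : ℕ} → MPNN d r → Set (ℝ → ℝ)
  | _, _, .single L => {L.σ}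
  | _, _, .cons L N => insert L.σ N.activations

/-- The number of layers of an MPNN. -/
def numLayers : {d r : ℕ} → MPNN d r → ℕ
  | _, _, .single _ => 1
  | _, _, .cons _ N => N.numLayers + 1

end MPNN

/-- MPLang expressions: `e ::= 1 | P_i | a·e | e + e | f(e) | ◇e`
with `f : ℝ → ℝ` continuous. -/
inductive MPLang : Type where
  | one : MPLang
  | proj : ℕ → MPLang
  | scale : ℝ → MPLang → MPLang
  | add : MPLang → MPLang → MPLang
  | app : (f : ℝ → ℝ) → Continuous f → MPLang → MPLang
  | diamond : MPLang → MPLang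

namespace MPLang

/-- `e` is appropriate for input arity `d`: every `P_i` has `1 ≤ i ≤ d`. -/
def Appropriate (d : ℕ) : MPLang → Prop
  | .one => True
  | .proj i => 1 ≤ i ∧ i ≤ d
  | .scale _ e => e.Appropriate d
  | .add e₁ e₂ => e₁.Appropriate d ∧ e₂.Appropriate d
  | .app _ _ e => e.Appropriate d
  | .diamond e => e.Appropriate d

/-- Semantics of MPLang expressions (the `P_i` are 1-based; out-of-range
projections, which cannot occur in expressions appropriate for `d`, yield 0). -/
noncomputable def eval (d : ℕ) : MPLang → (G : MPGraph) →
    (Fin G.n → Fin d → ℝ) → Fin G.n → ℝ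
  | .one, _, _, _ => 1
  | .proj i, _, χ, v => if h : i - 1 < d then χ v ⟨i - 1, h⟩ else 0
  | .scale a e, G, χ, v => a * e.eval d G χ v
  | .add e₁ e₂, G, χ, v => e₁.eval d G χ v + e₂.eval d G χ v
  | .app f _ e, G, χ, v => f (e.eval d G χ v)
  | .diamond e, G, χ, v => ∑ u ∈ G.neighbors v, e.eval d G χ u

/-- All function applications in the expression apply functions from `F`. -/
def AppsIn (F : Set (ℝ → ℝ)) : MPLang → Prop
  | .one => True
  | .proj _ => True
  | .scale _ e => e.AppsIn F
  | .add e₁ e₂ => e₁.AppsIn F ∧ e₂.AppsIn F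
  | .app f _ e => f ∈ F ∧ e.AppsIn F
  | .diamond e => e.AppsIn F

/-- A ReLU-MPLang expression: all function applications apply ReLU. -/
def IsReLU (e : MPLang) : Prop := e.AppsIn {ReLU}

end MPLang

namespace MPLang

lemma appsIn_mono {F F' : Set (ℝ → ℝ)} (h : F ⊆ F') :
    ∀ e : MPLang, e.AppsIn F → e.AppsIn F'
  | .one, _ => trivial
  | .proj _, _ => trivial
  | .scale _ e, he => appsIn_mono h e he
  | .add e₁ e₂, he => ⟨appsIn_mono h e₁ he.1, appsIn_mono h e₂ he.2⟩
  | .app _ _ e, he => ⟨h he.1, appsIn_mono h e he.2⟩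
  | .diamond e, he => appsIn_mono h e he

/-- Linear combination expression. -/
def combo {d : ℕ} (w1 w2 : Fin d → ℝ) (b : ℝ) (es : Fin d → MPLang) : MPLang :=
  ((List.finRange d).map (fun j =>
      MPLang.add (.scale (w1 j) (es j)) (.scale (w2 j) (.diamond (es j))))).foldr
    .add (.scale b .one)

lemma foldr_appropriate (d0 : ℕ) (l : List MPLang) (z : MPLang)
    (h : ∀ e ∈ l, e.Appropriate d0) (hz : z.Appropriate d0) :
    (l.foldr .add z).Appropriate d0 := by
  induction l with
  | nil => exact hz
  | cons a l ih =>
      exact ⟨h a (by simp), ih fun e he => h e (by simp [he])⟩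

lemma foldr_appsIn (F : Set (ℝ → ℝ)) (l : List MPLang) (z : MPLang)
    (h : ∀ e ∈ l, e.AppsIn F) (hz : z.AppsIn F) :
    (l.foldr .add z).AppsIn F := by
  induction l with
  | nil => exact hz
  | cons a l ih =>
      exact ⟨h a (by simp), ih fun e he => h e (by simp [he])⟩

lemma foldr_eval (d0 : ℕ) (l : List MPLang) (z : MPLang) (G : MPGraph)
    (χ : Fin G.n → Fin d0 → ℝ) (v : Fin G.n) :
    (l.foldr .add z).eval d0 G χ v
      = (l.map fun e => e.eval d0 G χ v).sum + z.eval d0 G χ v := by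
  induction l with
  | nil => simp
  | cons a l ih => simp [eval, ih]; ring

lemma combo_appropriate {d d0 : ℕ} (w1 w2 : Fin d → ℝ) (b : ℝ)
    (es : Fin d → MPLang) (h : ∀ j, (es j).Appropriate d0) :
    (combo w1 w2 b es).Appropriate d0 := by
  refine foldr_appropriate d0 _ _ ?_ trivial
  intro e he
  simp only [List.mem_map, List.mem_finRange] at he
  obtain ⟨j, _, rfl⟩ := he
  exact ⟨h j, h j⟩

lemma combo_appsIn {d : ℕ} (F : Set (ℝ → ℝ)) (w1 w2 : Fin d → ℝ) (b : ℝ)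
    (es : Fin d → MPLang) (h : ∀ j, (es j).AppsIn F) :
    (combo w1 w2 b es).AppsIn F := by
  refine foldr_appsIn F _ _ ?_ trivial
  intro e he
  simp only [List.mem_map, List.mem_finRange] at he
  obtain ⟨j, _, rfl⟩ := he
  exact ⟨h j, h j⟩

lemma combo_eval {d d0 : ℕ} (w1 w2 : Fin d → ℝ) (b : ℝ)
    (es : Fin d → MPLang) (G : MPGraph) (χ : Fin G.n → Fin d0 → ℝ) (v : Fin G.n) :
    (combo w1 w2 b es).eval d0 G χ v
      = (∑ j, (w1 j * (es j).eval d0 G χ v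
          + w2 j * ∑ u ∈ G.neighbors v, (es j).eval d0 G χ u)) + b := by
  rw [combo, foldr_eval, List.map_map, ← Fin.sum_univ_def]
  simp [eval, Function.comp]

end MPLang

lemma mpnn_to_mplang_aux : ∀ {d r : ℕ} (T : MPNN d r) {d0 : ℕ}
    (F : Set (ℝ → ℝ)) (xs : Fin d → MPLang)
    (_ : ∀ j, (xs j).Appropriate d0) (_ : ∀ j, (xs j).AppsIn F),
    ∃ es : Fin r → MPLang,
      (∀ j, (es j).Appropriate d0) ∧
      (∀ j, (es j).AppsIn (F ∪ T.activations)) ∧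
      ∀ (G : MPGraph) (χ : Fin G.n → Fin d0 → ℝ) (ψ : Fin G.n → Fin d → ℝ),
        (∀ v j, (xs j).eval d0 G χ v = ψ v j) →
        ∀ (v : Fin G.n) (j : Fin r), (es j).eval d0 G χ v = T.eval G ψ v j := by
  intro d r T
  induction T with
  | @single d r L =>
      intro d0 F xs hA hF
      refine ⟨fun i => .app L.σ L.hσ (.combo (L.W₁ i) (L.W₂ i) (L.b i) xs), ?_, ?_, ?_⟩
      · intro i; exact MPLang.combo_appropriate _ _ _ _ hA
      · intro i
        refine ⟨by simp [MPNN.activations], ?_⟩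
        exact MPLang.combo_appsIn _ _ _ _ _
          fun j => MPLang.appsIn_mono Set.subset_union_left _ (hF j)
      · intro G χ ψ hψ v i
        simp only [MPLang.eval, MPNN.eval, Layer.eval]
        congr 1
        rw [MPLang.combo_eval]
        simp [hψ, Matrix.mulVec, dotProduct, Finset.sum_apply,
          Finset.sum_add_distrib]
  | @cons d m r L N ih =>
      intro d0 F xs hA hF
      set ys : Fin m → MPLang :=
        fun i => .app L.σ L.hσ (.combo (L.W₁ i) (L.W₂ i) (L.b i) xs) with hys
      have hA' : ∀ i, (ys i).Appropriate d0 :=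
        fun i => MPLang.combo_appropriate _ _ _ _ hA
      have hF' : ∀ i, (ys i).AppsIn (F ∪ {L.σ}) := by
        intro i
        refine ⟨by simp, ?_⟩
        exact MPLang.combo_appsIn _ _ _ _ _
          fun j => MPLang.appsIn_mono Set.subset_union_left _ (hF j)
      obtain ⟨es, hes1, hes2, hes3⟩ := ih (F ∪ {L.σ}) ys hA' hF'
      refine ⟨es, hes1, ?_, ?_⟩
      · intro j
        refine MPLang.appsIn_mono ?_ _ (hes2 j)
        intro f hf
        simp only [Set.mem_union, Set.mem_singleton_iff, MPNN.activations,
          Set.mem_insert_iff] at hf ⊢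
        tauto
      · intro G χ ψ hψ v j
        refine hes3 G χ (L.eval G ψ) ?_ v j
        intro w i
        simp only [hys, MPLang.eval, Layer.eval]
        congr 1
        rw [MPLang.combo_eval]
        simp [hψ, Matrix.mulVec, dotProduct, Finset.sum_apply,
          Finset.sum_add_distrib]

/-- Proposition 1 of the paper: every MPNN has an equivalent
tuple of MPLang expressions, applying only activation functions used in the MPNN. -/
theorem mpnn_to_mplang (d r : ℕ) (T : MPNN d r) :
    ∃ es : Fin r → MPLang,
      (∀ j, (es j).Appropriate d) ∧
      (∀ j, (es j).AppsIn T.activations) ∧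
      ∀ (G : MPGraph) (χ : Fin G.n → Fin d → ℝ) (v : Fin G.n) (j : Fin r),
        (es j).eval d G χ v = T.eval G χ v j := by
  obtain ⟨es, h1, h2, h3⟩ := mpnn_to_mplang_aux T T.activations
    (fun j : Fin d => MPLang.proj (j.val + 1))
    (fun j => ⟨Nat.le_add_left 1 j.val, Nat.succ_le_of_lt j.isLt⟩)
    (fun j => trivial)
  refine ⟨es, h1, fun j => ?_, fun G χ v j => h3 G χ χ ?_ v j⟩
  · simpa [Set.union_self] using h2 j
  · intro v j
    simp [MPLang.eval, j.isLt]
end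

section
/- Let 𝓕 be a set of continuous functions from ℝ to ℝ. Any addition-free MPLang expression e (one containing no subexpression of the form e₁ + e₂) in which every function application applies a function from 𝓕 has an equivalent 𝓖-MPNN with 𝓖 = 𝓕 ∪ {id}, i.e., an MPNN all of whose layers have activation function in 𝓕 ∪ {id} that defines the same GFMT as e. -/
open scoped BigOperators

namespace MPLang

/-- An expression is addition-free if it contains no subexpression `e₁ + e₂`. -/
def AdditionFree : MPLang → Prop
  | .one => True
  | .proj _ => True
  | .scale _ e => e.AdditionFree
  | .add _ _ => False
  | .app _ _ e => e.AdditionFree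
  | .diamond e => e.AdditionFree

end MPLang

namespace MPNN

/-- Append a layer at the end of an MPNN. -/
def snoc : {d m r : ℕ} → MPNN d m → Layer m r → MPNN d r
  | _, _, _, .single L₀, L => .cons L₀ (.single L)
  | _, _, _, .cons L₀ N, L => .cons L₀ (N.snoc L)

theorem eval_snoc {d m r : ℕ} (N : MPNN d m) (L : Layer m r) (G : MPGraph)
    (χ : Fin G.n → Fin d → ℝ) :
    (N.snoc L).eval G χ = L.eval G (N.eval G χ) := by
  induction N with
  | single L₀ => rfl
  | cons L₀ N ih => simp [snoc, eval, ih]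

theorem activations_snoc {d m r : ℕ} (N : MPNN d m) (L : Layer m r) :
    (N.snoc L).activations = insert L.σ N.activations := by
  induction N with
  | single L₀ =>
    simp [snoc, activations]
    exact Set.pair_comm _ _
  | cons L₀ N ih =>
    simp [snoc, activations, ih]
    exact (Set.insert_comm _ _ _)

end MPNN

/-- A one-output layer with given parameters. -/
noncomputable def mkLayer1 {m : ℕ} (w₁ w₂ : Fin m → ℝ) (b : ℝ) (σ : ℝ → ℝ)
    (hσ : Continuous σ) : Layer m 1 where
  W₁ := Matrix.of fun _ j => w₁ j
  W₂ := Matrix.of fun _ j => w₂ j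
  b := fun _ => b
  σ := σ
  hσ := hσ

theorem mkLayer1_eval {m : ℕ} (w₁ w₂ : Fin m → ℝ) (b : ℝ) (σ : ℝ → ℝ)
    (hσ : Continuous σ) (G : MPGraph) (χ : Fin G.n → Fin m → ℝ) (v : Fin G.n) :
    (mkLayer1 w₁ w₂ b σ hσ).eval G χ v 0 =
      σ ((∑ j, w₁ j * χ v j) + (∑ j, w₂ j * (∑ u ∈ G.neighbors v, χ u) j) + b) := by
  simp [mkLayer1, Layer.eval, Matrix.mulVec, dotProduct, Finset.sum_apply]

/-- Proposition 2 of the paper: any addition-free MPLang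
expression using functions from `F` has an equivalent `(F ∪ {id})`-MPNN. -/
theorem additionFree_mplang_to_mpnn (F : Set (ℝ → ℝ)) (hF : ∀ f ∈ F, Continuous f)
    (e : MPLang) (hadd : e.AdditionFree) (heF : e.AppsIn F)
    (d : ℕ) (hd : e.Appropriate d) :
    ∃ N : MPNN d 1, N.activations ⊆ insert id F ∧
      ∀ (G : MPGraph) (χ : Fin G.n → Fin d → ℝ) (v : Fin G.n),
        N.eval G χ v 0 = e.eval d G χ v := by
  induction e with
  | one =>
    refine ⟨.single (mkLayer1 (fun _ => 0) (fun _ => 0) 1 id continuous_id), ?_, ?_⟩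
    · simp [MPNN.activations, mkLayer1]
    · intro G χ v
      simp [MPNN.eval, mkLayer1_eval, MPLang.eval]
  | proj i =>
    obtain ⟨h1, h2⟩ := hd
    have hi : i - 1 < d := by omega
    refine ⟨.single (mkLayer1 (fun j => if (j : ℕ) = i - 1 then 1 else 0)
      (fun _ => 0) 0 id continuous_id), ?_, ?_⟩
    · simp [MPNN.activations, mkLayer1]
    · intro G χ v
      simp only [MPNN.eval, mkLayer1_eval, MPLang.eval, hi, dif_pos]
      have : ∀ j : Fin d, (if (j : ℕ) = i - 1 then (1:ℝ) else 0) * χ v j =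
          if j = ⟨i - 1, hi⟩ then χ v j else 0 := by
        intro j
        by_cases h : (j : ℕ) = i - 1
        · rw [if_pos h, if_pos (Fin.ext h), one_mul]
        · rw [if_neg h, if_neg (fun hj => h (by rw [hj])), zero_mul]
      simp [this]
  | scale a e ih =>
    obtain ⟨N, hact, heval⟩ := ih hadd heF hd
    refine ⟨N.snoc (mkLayer1 (fun _ => a) (fun _ => 0) 0 id continuous_id), ?_, ?_⟩
    · rw [MPNN.activations_snoc]
      exact Set.insert_subset (by simp [mkLayer1]) hact
    · intro G χ v
      rw [MPNN.eval_snoc, mkLayer1_eval]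
      simp [MPLang.eval, heval G χ v]
  | add e₁ e₂ ih₁ ih₂ => exact absurd hadd (by simp [MPLang.AdditionFree])
  | app f hf e ih =>
    obtain ⟨N, hact, heval⟩ := ih hadd heF.2 hd
    refine ⟨N.snoc (mkLayer1 (fun _ => 1) (fun _ => 0) 0 f hf), ?_, ?_⟩
    · rw [MPNN.activations_snoc]
      exact Set.insert_subset (Set.mem_insert_of_mem _ heF.1) hact
    · intro G χ v
      rw [MPNN.eval_snoc, mkLayer1_eval]
      simp [MPLang.eval, heval G χ v]
  | diamond e ih =>
    obtain ⟨N, hact, heval⟩ := ih hadd heF hd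
    refine ⟨N.snoc (mkLayer1 (fun _ => 0) (fun _ => 1) 0 id continuous_id), ?_, ?_⟩
    · rw [MPNN.activations_snoc]
      exact Set.insert_subset (by simp [mkLayer1]) hact
    · intro G χ v
      rw [MPNN.eval_snoc, mkLayer1_eval]
      simp only [MPLang.eval, zero_mul, Finset.sum_const_zero, one_mul, zero_add,
        add_zero, id_eq, Fin.sum_univ_one, Finset.sum_apply]
      exact Finset.sum_congr rfl fun u _ => heval G χ u
end

section
/- ReLU-MPNNs are closed under concatenation: for any two ReLU-MPNNs L and K of types d → r₁ and d → r₂ respectively, there exists a ReLU-MPNN of type d → (r₁ + r₂) that expresses the concatenation L | K. -/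
open scoped BigOperators

section Aux

open Matrix

lemma relu_sub_relu_neg (a : ℝ) : ReLU a - ReLU (-a) = a := by
  unfold ReLU
  rcases le_total a 0 with h | h
  · rw [max_eq_left h, max_eq_right (neg_nonneg.mpr h)]; ring
  · rw [max_eq_right h, max_eq_left (neg_nonpos.mpr h)]; ring

lemma continuous_ReLU : Continuous ReLU := continuous_const.max continuous_id

/-- Vertical stack of two matrices. -/
noncomputable def stackM {m₁ m₂ d : ℕ} (A : Matrix (Fin m₁) (Fin d) ℝ) (B : Matrix (Fin m₂) (Fin d) ℝ) :
    Matrix (Fin (m₁ + m₂)) (Fin d) ℝ :=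
  Matrix.of fun i j => Fin.addCases (fun i₁ => A i₁ j) (fun i₂ => B i₂ j) i

lemma stackM_mulVec {m₁ m₂ d : ℕ} (A : Matrix (Fin m₁) (Fin d) ℝ) (B : Matrix (Fin m₂) (Fin d) ℝ)
    (x : Fin d → ℝ) : (stackM A B).mulVec x = Fin.append (A.mulVec x) (B.mulVec x) := by
  funext i
  induction i using Fin.addCases with
  | left i => simp [stackM, Matrix.mulVec, dotProduct, Fin.append_left]
  | right i => simp [stackM, Matrix.mulVec, dotProduct, Fin.append_right]

/-- Block-diagonal of two matrices. -/
noncomputable def diagM {m₁ d₁ m₂ d₂ : ℕ} (A : Matrix (Fin m₁) (Fin d₁) ℝ) (B : Matrix (Fin m₂) (Fin d₂) ℝ) :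
    Matrix (Fin (m₁ + m₂)) (Fin (d₁ + d₂)) ℝ :=
  Matrix.of fun i j =>
    Fin.addCases (fun i₁ => Fin.addCases (fun j₁ => A i₁ j₁) (fun _ => 0) j)
      (fun i₂ => Fin.addCases (fun _ => 0) (fun j₂ => B i₂ j₂) j) i

lemma diagM_mulVec {m₁ d₁ m₂ d₂ : ℕ} (A : Matrix (Fin m₁) (Fin d₁) ℝ) (B : Matrix (Fin m₂) (Fin d₂) ℝ)
    (x : Fin d₁ → ℝ) (y : Fin d₂ → ℝ) :
    (diagM A B).mulVec (Fin.append x y) = Fin.append (A.mulVec x) (B.mulVec y) := by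
  funext i
  induction i using Fin.addCases with
  | left i =>
      simp [diagM, Matrix.mulVec, dotProduct, Fin.append_left, Fin.sum_univ_add, Fin.append_right]
  | right i =>
      simp [diagM, Matrix.mulVec, dotProduct, Fin.append_left, Fin.sum_univ_add, Fin.append_right]

/-- Decode matrix `[I, -I]`. -/
noncomputable def decMat (m : ℕ) : Matrix (Fin m) (Fin (m + m)) ℝ :=
  Matrix.of fun i j =>
    Fin.addCases (fun j₁ => if i = j₁ then (1 : ℝ) else 0) (fun j₂ => if i = j₂ then (-1 : ℝ) else 0) j

lemma decMat_mulVec (m : ℕ) (y : Fin (m + m) → ℝ) (i : Fin m) :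
    (decMat m).mulVec y i = y (Fin.castAdd m i) - y (Fin.natAdd m i) := by
  simp only [decMat, Matrix.mulVec, dotProduct, Matrix.of_apply]
  rw [Fin.sum_univ_add]
  simp only [Fin.addCases_left, Fin.addCases_right]
  simp [ite_mul, Finset.sum_ite_eq, sub_eq_add_neg]

lemma sum_append {β : Type*} (s : Finset β) {m n : ℕ} (f : β → Fin m → ℝ) (g : β → Fin n → ℝ) :
    ∑ u ∈ s, Fin.append (f u) (g u) = Fin.append (∑ u ∈ s, f u) (∑ u ∈ s, g u) := by
  funext i
  induction i using Fin.addCases with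
  | left i => simp [Finset.sum_apply, Fin.append_left]
  | right i => simp [Finset.sum_apply, Fin.append_right]

lemma mulVec_sum {β : Type*} (s : Finset β) {m n : ℕ} (A : Matrix (Fin m) (Fin n) ℝ)
    (f : β → Fin n → ℝ) : A.mulVec (∑ u ∈ s, f u) = ∑ u ∈ s, A.mulVec (f u) := by
  funext i
  simp [Matrix.mulVec, dotProduct, Finset.sum_apply, Finset.mul_sum]
  rw [Finset.sum_comm]

/-- key decoding identity -/
lemma dec_relu {m : ℕ} (z : Fin m → ℝ) :
    (decMat m).mulVec (fun k => ReLU (Fin.append z (-z) k)) = z := by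
  funext i
  rw [decMat_mulVec]
  simp only [Fin.append_left, Fin.append_right, Pi.neg_apply]
  exact relu_sub_relu_neg (z i)

end Aux
section Machinery

open Matrix

/-- "Strict" ReLU-MPNN: all layers ReLU except the last, which is identity. -/
def MPNN.Strict : {d r : ℕ} → MPNN d r → Prop
  | _, _, .single L => L.σ = id
  | _, _, .cons L N => L.σ = ReLU ∧ N.Strict

lemma MPNN.Strict.isReLU : ∀ {d r : ℕ} (M : MPNN d r), M.Strict → M.IsReLU
  | _, _, .single _, h => Or.inr h
  | _, _, .cons _ N, h => ⟨h.1, MPNN.Strict.isReLU N h.2⟩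

lemma MPNN.numLayers_pos : ∀ {d r : ℕ} (M : MPNN d r), 0 < M.numLayers
  | _, _, .single _ => Nat.one_pos
  | _, _, .cons _ N => Nat.succ_pos _

/-- Identity layer. -/
noncomputable def idLayer (r : ℕ) : Layer r r := ⟨1, 0, 0, id, continuous_id⟩

/-- ReLU encoding layer of type `d → d + d`, computing `(ReLU x, ReLU (-x))`. -/
noncomputable def encLayer (d : ℕ) : Layer d (d + d) :=
  ⟨stackM 1 (-1), 0, 0, ReLU, continuous_ReLU⟩

lemma encLayer_eval (d : ℕ) (G : MPGraph) (χ : Fin G.n → Fin d → ℝ) (v : Fin G.n) :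
    (encLayer d).eval G χ v = fun k => ReLU (Fin.append (χ v) (-(χ v)) k) := by
  funext k
  simp only [encLayer, Layer.eval, stackM_mulVec, Matrix.one_mulVec, Matrix.neg_mulVec,
    Matrix.zero_mulVec, Pi.zero_apply, add_zero]

/-- Replace the first layer `(W₁, W₂, b, σ)` by `(W₁D, W₂D, b, σ)`. -/
noncomputable def MPNN.precompose : {d r : ℕ} → MPNN d r → {e : ℕ} →
    Matrix (Fin d) (Fin e) ℝ → MPNN e r
  | _, _, .single L, _, D => .single ⟨L.W₁ * D, L.W₂ * D, L.b, L.σ, L.hσ⟩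
  | _, _, .cons L N, _, D => .cons ⟨L.W₁ * D, L.W₂ * D, L.b, L.σ, L.hσ⟩ N

lemma MPNN.precompose_strict : ∀ {d r : ℕ} (M : MPNN d r) {e : ℕ}
    (D : Matrix (Fin d) (Fin e) ℝ), M.Strict → (M.precompose D).Strict
  | _, _, .single _, _, _, h => h
  | _, _, .cons _ _, _, _, h => h

lemma MPNN.precompose_numLayers : ∀ {d r : ℕ} (M : MPNN d r) {e : ℕ}
    (D : Matrix (Fin d) (Fin e) ℝ), (M.precompose D).numLayers = M.numLayers
  | _, _, .single _, _, _ => rfl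
  | _, _, .cons _ _, _, _ => rfl

lemma layer_precompose_eval {d r e : ℕ} (L : Layer d r) (D : Matrix (Fin d) (Fin e) ℝ)
    (G : MPGraph) (χ : Fin G.n → Fin e → ℝ) :
    (Layer.mk (L.W₁ * D) (L.W₂ * D) L.b L.σ L.hσ).eval G χ
      = L.eval G (fun u => D.mulVec (χ u)) := by
  funext v i
  have h1 : (∑ u ∈ G.neighbors v, D.mulVec (χ u)) = D.mulVec (∑ u ∈ G.neighbors v, χ u) :=
    (mulVec_sum _ _ _).symm
  simp only [Layer.eval, h1, Matrix.mulVec_mulVec]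

lemma MPNN.precompose_eval : ∀ {d r : ℕ} (M : MPNN d r) {e : ℕ}
    (D : Matrix (Fin d) (Fin e) ℝ) (G : MPGraph) (χ : Fin G.n → Fin e → ℝ),
    (M.precompose D).eval G χ = M.eval G (fun u => D.mulVec (χ u))
  | _, _, .single L, _, D, G, χ => layer_precompose_eval L D G χ
  | _, _, .cons L N, _, D, G, χ => by
      show N.eval G ((Layer.mk (L.W₁ * D) (L.W₂ * D) L.b L.σ L.hσ).eval G χ)
        = N.eval G (L.eval G fun u => D.mulVec (χ u))
      rw [layer_precompose_eval L D G χ]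

/-- Prepending an encode layer (fusing the decode into the first layer)
increases depth by one while preserving semantics and strictness. -/
lemma exists_prepend {d r : ℕ} (M : MPNN d r) (hM : M.Strict) :
    ∃ M' : MPNN d r, M'.Strict ∧ M'.numLayers = M.numLayers + 1 ∧
      ∀ G χ, M'.eval G χ = M.eval G χ := by
  refine ⟨.cons (encLayer d) (M.precompose (decMat d)), ?_, ?_, fun G χ => ?_⟩
  · exact ⟨rfl, M.precompose_strict _ hM⟩
  · simp [MPNN.numLayers, MPNN.precompose_numLayers]
  · show (M.precompose (decMat d)).eval G ((encLayer d).eval G χ) = _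
    rw [MPNN.precompose_eval]
    have : (fun u => (decMat d).mulVec ((encLayer d).eval G χ u)) = χ := by
      funext u
      rw [encLayer_eval]
      exact dec_relu (χ u)
    rw [this]

lemma exists_pad {d r : ℕ} (M : MPNN d r) (hM : M.Strict) (k : ℕ) :
    ∃ M' : MPNN d r, M'.Strict ∧ M'.numLayers = M.numLayers + k ∧
      ∀ G χ, M'.eval G χ = M.eval G χ := by
  induction k with
  | zero => exact ⟨M, hM, rfl, fun _ _ => rfl⟩
  | succ k ih =>
      obtain ⟨M', h1, h2, h3⟩ := ih
      obtain ⟨M'', g1, g2, g3⟩ := exists_prepend M' h1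
      exact ⟨M'', g1, by omega, fun G χ => (g3 G χ).trans (h3 G χ)⟩

/-- Normalization: every ReLU-MPNN is equivalent to a strict one of depth +1. -/
lemma exists_strict : ∀ {d r : ℕ} (M : MPNN d r), M.IsReLU →
    ∃ M' : MPNN d r, M'.Strict ∧ M'.numLayers = M.numLayers + 1 ∧
      ∀ G χ, M'.eval G χ = M.eval G χ
  | _, _, .single L, h => by
      rcases h with h | h
      · -- last layer ReLU: append identity layer
        refine ⟨.cons L (.single (idLayer _)), ⟨h, rfl⟩, rfl, fun G χ => ?_⟩
        funext v i
        simp [MPNN.eval, idLayer, Layer.eval, Matrix.one_mulVec, Matrix.zero_mulVec]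
      · -- last layer id: split into ReLU-encode then linear decode
        refine ⟨.cons ⟨stackM L.W₁ (-L.W₁), stackM L.W₂ (-L.W₂), Fin.append L.b (-L.b),
            ReLU, continuous_ReLU⟩ (.single ⟨decMat _, 0, 0, id, continuous_id⟩),
          ⟨rfl, rfl⟩, rfl, fun G χ => ?_⟩
        have hX : ∀ u : Fin G.n,
            (Layer.mk (stackM L.W₁ (-L.W₁)) (stackM L.W₂ (-L.W₂)) (Fin.append L.b (-L.b))
              ReLU continuous_ReLU).eval G χ u
            = fun k => ReLU (Fin.append
                (fun i => L.W₁.mulVec (χ u) i + L.W₂.mulVec (∑ w ∈ G.neighbors u, χ w) i + L.b i)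
                (-(fun i => L.W₁.mulVec (χ u) i + L.W₂.mulVec (∑ w ∈ G.neighbors u, χ w) i + L.b i)) k) := by
          intro u
          funext k
          simp only [Layer.eval, stackM_mulVec, Matrix.neg_mulVec]
          congr 1
          induction k using Fin.addCases with
          | left k => simp only [Fin.append_left]
          | right k => simp only [Fin.append_right, Pi.neg_apply]; ring
        funext v i
        simp only [MPNN.eval, Layer.eval, Matrix.zero_mulVec, Pi.zero_apply, add_zero, h, id_eq]
        rw [hX v, dec_relu]
  | _, _, .cons L N, h => by
      obtain ⟨N', g1, g2, g3⟩ := exists_strict N h.2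
      refine ⟨.cons L N', ⟨h.1, g1⟩, ?_, fun G χ => g3 G _⟩
      show N'.numLayers + 1 = N.numLayers + 1 + 1
      omega

end Machinery
section Zip

open Matrix

/-- Vertical stacking of two layers with shared input. -/
noncomputable def vstackL {d m₁ m₂ : ℕ} (L₁ : Layer d m₁) (L₂ : Layer d m₂) : Layer d (m₁ + m₂) :=
  ⟨stackM L₁.W₁ L₂.W₁, stackM L₁.W₂ L₂.W₂, Fin.append L₁.b L₂.b, L₁.σ, L₁.hσ⟩

/-- Block-diagonal combination of two layers. -/
noncomputable def diagL {d₁ m₁ d₂ m₂ : ℕ} (L₁ : Layer d₁ m₁) (L₂ : Layer d₂ m₂) :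
    Layer (d₁ + d₂) (m₁ + m₂) :=
  ⟨diagM L₁.W₁ L₂.W₁, diagM L₁.W₂ L₂.W₂, Fin.append L₁.b L₂.b, L₁.σ, L₁.hσ⟩

lemma vstackL_eval {d m₁ m₂ : ℕ} (L₁ : Layer d m₁) (L₂ : Layer d m₂) (h : L₂.σ = L₁.σ)
    (G : MPGraph) (χ : Fin G.n → Fin d → ℝ) (v : Fin G.n) :
    (vstackL L₁ L₂).eval G χ v = Fin.append (L₁.eval G χ v) (L₂.eval G χ v) := by
  funext i
  simp only [vstackL, Layer.eval, stackM_mulVec]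
  induction i using Fin.addCases with
  | left i => simp only [Fin.append_left]; rfl
  | right i => simp only [Fin.append_right, ← h]; rfl

lemma diagL_eval {d₁ m₁ d₂ m₂ : ℕ} (L₁ : Layer d₁ m₁) (L₂ : Layer d₂ m₂) (h : L₂.σ = L₁.σ)
    (G : MPGraph) (χ₁ : Fin G.n → Fin d₁ → ℝ) (χ₂ : Fin G.n → Fin d₂ → ℝ) (v : Fin G.n) :
    (diagL L₁ L₂).eval G (fun u => Fin.append (χ₁ u) (χ₂ u)) v
      = Fin.append (L₁.eval G χ₁ v) (L₂.eval G χ₂ v) := by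
  funext i
  simp only [diagL, Layer.eval, sum_append, diagM_mulVec]
  induction i using Fin.addCases with
  | left i => simp only [Fin.append_left]; rfl
  | right i => simp only [Fin.append_right, ← h]; rfl

/-- Block-diagonal zip of two MPNNs (garbage on mismatched depths). -/
noncomputable def zipD : {d₁ r₁ d₂ r₂ : ℕ} → MPNN d₁ r₁ → MPNN d₂ r₂ → MPNN (d₁ + d₂) (r₁ + r₂)
  | _, _, _, _, .single L₁, .single L₂ => .single (diagL L₁ L₂)
  | _, _, _, _, .cons L₁ N₁, .cons L₂ N₂ => .cons (diagL L₁ L₂) (zipD N₁ N₂)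
  | _, _, _, _, .single L₁, .cons _ _ => .single ⟨0, 0, 0, L₁.σ, L₁.hσ⟩
  | _, _, _, _, .cons L₁ _, .single _ => .single ⟨0, 0, 0, L₁.σ, L₁.hσ⟩

/-- Shared-input zip of two MPNNs (garbage on mismatched depths). -/
noncomputable def zipS : {d r₁ r₂ : ℕ} → MPNN d r₁ → MPNN d r₂ → MPNN d (r₁ + r₂)
  | _, _, _, .single L₁, .single L₂ => .single (vstackL L₁ L₂)
  | _, _, _, .cons L₁ N₁, .cons L₂ N₂ => .cons (vstackL L₁ L₂) (zipD N₁ N₂)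
  | _, _, _, .single L₁, .cons _ _ => .single ⟨0, 0, 0, L₁.σ, L₁.hσ⟩
  | _, _, _, .cons L₁ _, .single _ => .single ⟨0, 0, 0, L₁.σ, L₁.hσ⟩

lemma zipD_strict : ∀ {d₁ r₁ d₂ r₂ : ℕ} (M₁ : MPNN d₁ r₁) (M₂ : MPNN d₂ r₂),
    M₁.Strict → M₂.Strict → M₁.numLayers = M₂.numLayers → (zipD M₁ M₂).Strict
  | _, _, _, _, .single L₁, .single L₂, h₁, _, _ => h₁
  | _, _, _, _, .cons L₁ N₁, .cons L₂ N₂, h₁, h₂, hn =>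
      ⟨h₁.1, zipD_strict N₁ N₂ h₁.2 h₂.2 (by
        have := Nat.succ_injective hn; exact this)⟩
  | _, _, _, _, .single _, .cons _ N₂, _, _, hn => by
      exfalso; have := N₂.numLayers_pos; simp [MPNN.numLayers] at hn; omega
  | _, _, _, _, .cons _ N₁, .single _, _, _, hn => by
      exfalso; have := N₁.numLayers_pos; simp [MPNN.numLayers] at hn; omega

lemma zipS_strict : ∀ {d r₁ r₂ : ℕ} (M₁ : MPNN d r₁) (M₂ : MPNN d r₂),
    M₁.Strict → M₂.Strict → M₁.numLayers = M₂.numLayers → (zipS M₁ M₂).Strict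
  | _, _, _, .single L₁, .single L₂, h₁, _, _ => h₁
  | _, _, _, .cons L₁ N₁, .cons L₂ N₂, h₁, h₂, hn =>
      ⟨h₁.1, zipD_strict N₁ N₂ h₁.2 h₂.2 (Nat.succ_injective hn)⟩
  | _, _, _, .single _, .cons _ N₂, _, _, hn => by
      exfalso; have := N₂.numLayers_pos; simp [MPNN.numLayers] at hn; omega
  | _, _, _, .cons _ N₁, .single _, _, _, hn => by
      exfalso; have := N₁.numLayers_pos; simp [MPNN.numLayers] at hn; omega

/-- Last activation functions agree for strict MPNNs of equal depth:
non-final layers are ReLU, final layers are id, on both sides. -/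
lemma zipD_eval : ∀ {d₁ r₁ d₂ r₂ : ℕ} (M₁ : MPNN d₁ r₁) (M₂ : MPNN d₂ r₂),
    M₁.Strict → M₂.Strict → M₁.numLayers = M₂.numLayers →
    ∀ (G : MPGraph) (χ₁ : Fin G.n → Fin d₁ → ℝ) (χ₂ : Fin G.n → Fin d₂ → ℝ),
      (zipD M₁ M₂).eval G (fun u => Fin.append (χ₁ u) (χ₂ u))
        = fun v => Fin.append (M₁.eval G χ₁ v) (M₂.eval G χ₂ v)
  | _, _, _, _, .single L₁, .single L₂, h₁, h₂, _, G, χ₁, χ₂ => by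
      funext v
      exact diagL_eval L₁ L₂ (h₂.trans h₁.symm) G χ₁ χ₂ v
  | _, _, _, _, .cons L₁ N₁, .cons L₂ N₂, h₁, h₂, hn, G, χ₁, χ₂ => by
      show (zipD N₁ N₂).eval G ((diagL L₁ L₂).eval G _) = _
      have hL : (diagL L₁ L₂).eval G (fun u => Fin.append (χ₁ u) (χ₂ u))
          = fun u => Fin.append (L₁.eval G χ₁ u) (L₂.eval G χ₂ u) := by
        funext u
        exact diagL_eval L₁ L₂ (h₂.1.trans h₁.1.symm) G χ₁ χ₂ u
      rw [hL, zipD_eval N₁ N₂ h₁.2 h₂.2 (Nat.succ_injective hn)]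
      rfl
  | _, _, _, _, .single _, .cons _ N₂, _, _, hn, G, χ₁, χ₂ => by
      exfalso; have := N₂.numLayers_pos; simp [MPNN.numLayers] at hn; omega
  | _, _, _, _, .cons _ N₁, .single _, _, _, hn, G, χ₁, χ₂ => by
      exfalso; have := N₁.numLayers_pos; simp [MPNN.numLayers] at hn; omega

lemma zipS_eval : ∀ {d r₁ r₂ : ℕ} (M₁ : MPNN d r₁) (M₂ : MPNN d r₂),
    M₁.Strict → M₂.Strict → M₁.numLayers = M₂.numLayers →
    ∀ (G : MPGraph) (χ : Fin G.n → Fin d → ℝ) (v : Fin G.n),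
      (zipS M₁ M₂).eval G χ v = Fin.append (M₁.eval G χ v) (M₂.eval G χ v)
  | _, _, _, .single L₁, .single L₂, h₁, h₂, _, G, χ, v =>
      vstackL_eval L₁ L₂ (h₂.trans h₁.symm) G χ v
  | _, _, _, .cons L₁ N₁, .cons L₂ N₂, h₁, h₂, hn, G, χ, v => by
      show (zipD N₁ N₂).eval G ((vstackL L₁ L₂).eval G χ) v = _
      have hL : (vstackL L₁ L₂).eval G χ
          = fun u => Fin.append (L₁.eval G χ u) (L₂.eval G χ u) := by
        funext u
        exact vstackL_eval L₁ L₂ (h₂.1.trans h₁.1.symm) G χ u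
      rw [hL, zipD_eval N₁ N₂ h₁.2 h₂.2 (Nat.succ_injective hn)]
      rfl
  | _, _, _, .single _, .cons _ N₂, _, _, hn, G, χ, v => by
      exfalso; have := N₂.numLayers_pos; simp [MPNN.numLayers] at hn; omega
  | _, _, _, .cons _ N₁, .single _, _, _, hn, G, χ, v => by
      exfalso; have := N₁.numLayers_pos; simp [MPNN.numLayers] at hn; omega

end Zip

/-- Lemma 2 of the paper: ReLU-MPNNs are closed under
concatenation. -/
theorem relu_mpnn_concat (d r₁ r₂ : ℕ) (L : MPNN d r₁) (K : MPNN d r₂)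
    (hL : L.IsReLU) (hK : K.IsReLU) :
    ∃ N : MPNN d (r₁ + r₂), N.IsReLU ∧
      ∀ (G : MPGraph) (χ : Fin G.n → Fin d → ℝ) (v : Fin G.n),
        N.eval G χ v = Fin.append (L.eval G χ v) (K.eval G χ v) := by
  obtain ⟨L₁, hL₁, hLn, hLe⟩ := exists_strict L hL
  obtain ⟨K₁, hK₁, hKn, hKe⟩ := exists_strict K hK
  obtain ⟨L₂, gL₁, gLn, gLe⟩ := exists_pad L₁ hL₁ (max L₁.numLayers K₁.numLayers - L₁.numLayers)
  obtain ⟨K₂, gK₁, gKn, gKe⟩ := exists_pad K₁ hK₁ (max L₁.numLayers K₁.numLayers - K₁.numLayers)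
  have hdepth : L₂.numLayers = K₂.numLayers := by
    rw [gLn, gKn]
    omega
  refine ⟨zipS L₂ K₂, MPNN.Strict.isReLU _ (zipS_strict L₂ K₂ gL₁ gK₁ hdepth), fun G χ v => ?_⟩
  rw [zipS_eval L₂ K₂ gL₁ gK₁ hdepth, gLe, gKe, hLe, hKe]
end

section
/- Let L and K be MPNN layers of types d_L → r_L and d_K → r_K respectively, let X_L ⊆ ℝ^{d_L} and X_K ⊆ ℝ^{d_K} be bounded, and let p be a natural number. Then there exist MPNN layers L' and K' such that: (1) L' and K' have the same activation function; (2) L' is equivalent to L over 𝔾_p and X_L; and (3) K' is equivalent to K over 𝔾_p and X_K. -/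
open scoped BigOperators

lemma layer_arg_bound {d r : ℕ} (L : Layer d r) (p : ℕ) (X : Set (Fin d → ℝ))
    (hX : Bornology.IsBounded X) :
    ∃ M : ℝ, 0 ≤ M ∧ ∀ (G : MPGraph), G.DegreeLE p →
      ∀ χ : Fin G.n → Fin d → ℝ, (∀ v, χ v ∈ X) → ∀ v i,
        |L.W₁.mulVec (χ v) i + L.W₂.mulVec (∑ u ∈ G.neighbors v, χ u) i + L.b i| ≤ M := by
  obtain ⟨C0, hC0⟩ := (isBounded_iff_forall_norm_le).1 hX
  set C : ℝ := max C0 0 with hC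
  have hCnn : 0 ≤ C := le_max_right _ _
  have hXC : ∀ x ∈ X, ∀ j, |x j| ≤ C := by
    intro x hx j
    calc |x j| = ‖x j‖ := rfl
      _ ≤ ‖x‖ := norm_le_pi_norm x j
      _ ≤ C0 := hC0 x hx
      _ ≤ C := le_max_left _ _
  set S1 : ℝ := ∑ i, ∑ j, |L.W₁ i j| with hS1
  set S2 : ℝ := ∑ i, ∑ j, |L.W₂ i j| with hS2
  set S3 : ℝ := ∑ i, |L.b i| with hS3
  have hS1nn : 0 ≤ S1 := Finset.sum_nonneg fun i _ =>
    Finset.sum_nonneg fun j _ => abs_nonneg _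
  have hS2nn : 0 ≤ S2 := Finset.sum_nonneg fun i _ =>
    Finset.sum_nonneg fun j _ => abs_nonneg _
  have hS3nn : 0 ≤ S3 := Finset.sum_nonneg fun i _ => abs_nonneg _
  refine ⟨S1 * C + S2 * (p * C) + S3, by positivity, ?_⟩
  intro G hG χ hχ v i
  have hrow1 : ∀ i, (∑ j, |L.W₁ i j|) ≤ S1 := by
    intro i
    exact Finset.single_le_sum (f := fun i => ∑ j, |L.W₁ i j|)
      (fun i _ => Finset.sum_nonneg fun j _ => abs_nonneg _) (Finset.mem_univ i)
  have hrow2 : ∀ i, (∑ j, |L.W₂ i j|) ≤ S2 := by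
    intro i
    exact Finset.single_le_sum (f := fun i => ∑ j, |L.W₂ i j|)
      (fun i _ => Finset.sum_nonneg fun j _ => abs_nonneg _) (Finset.mem_univ i)
  have h1 : |L.W₁.mulVec (χ v) i| ≤ S1 * C := by
    calc |L.W₁.mulVec (χ v) i| = |∑ j, L.W₁ i j * χ v j| := rfl
      _ ≤ ∑ j, |L.W₁ i j * χ v j| := Finset.abs_sum_le_sum_abs _ _
      _ = ∑ j, |L.W₁ i j| * |χ v j| := by simp [abs_mul]
      _ ≤ ∑ j, |L.W₁ i j| * C :=
        Finset.sum_le_sum fun j _ =>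
          mul_le_mul_of_nonneg_left (hXC _ (hχ v) j) (abs_nonneg _)
      _ = (∑ j, |L.W₁ i j|) * C := by rw [Finset.sum_mul]
      _ ≤ S1 * C := mul_le_mul_of_nonneg_right (hrow1 i) hCnn
  have hsum : ∀ j, |(∑ u ∈ G.neighbors v, χ u) j| ≤ p * C := by
    intro j
    have : (∑ u ∈ G.neighbors v, χ u) j = ∑ u ∈ G.neighbors v, χ u j := by
      simp
    rw [this]
    calc |∑ u ∈ G.neighbors v, χ u j| ≤ ∑ u ∈ G.neighbors v, |χ u j| :=
        Finset.abs_sum_le_sum_abs _ _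
      _ ≤ ∑ _u ∈ G.neighbors v, C := Finset.sum_le_sum fun u _ => hXC _ (hχ u) j
      _ = (G.neighbors v).card * C := by rw [Finset.sum_const, nsmul_eq_mul]
      _ ≤ p * C := by
        apply mul_le_mul_of_nonneg_right _ hCnn
        exact_mod_cast hG v
  have h2 : |L.W₂.mulVec (∑ u ∈ G.neighbors v, χ u) i| ≤ S2 * (p * C) := by
    calc |L.W₂.mulVec (∑ u ∈ G.neighbors v, χ u) i|
        = |∑ j, L.W₂ i j * (∑ u ∈ G.neighbors v, χ u) j| := rfl
      _ ≤ ∑ j, |L.W₂ i j * (∑ u ∈ G.neighbors v, χ u) j| :=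
        Finset.abs_sum_le_sum_abs _ _
      _ = ∑ j, |L.W₂ i j| * |(∑ u ∈ G.neighbors v, χ u) j| := by simp [abs_mul]
      _ ≤ ∑ j, |L.W₂ i j| * (p * C) :=
        Finset.sum_le_sum fun j _ =>
          mul_le_mul_of_nonneg_left (hsum j) (abs_nonneg _)
      _ = (∑ j, |L.W₂ i j|) * (p * C) := by rw [Finset.sum_mul]
      _ ≤ S2 * (p * C) :=
        mul_le_mul_of_nonneg_right (hrow2 i) (by positivity)
  have h3 : |L.b i| ≤ S3 :=
    Finset.single_le_sum (f := fun i => |L.b i|)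
      (fun i _ => abs_nonneg _) (Finset.mem_univ i)
  calc |L.W₁.mulVec (χ v) i + L.W₂.mulVec (∑ u ∈ G.neighbors v, χ u) i + L.b i|
      ≤ |L.W₁.mulVec (χ v) i + L.W₂.mulVec (∑ u ∈ G.neighbors v, χ u) i| + |L.b i| :=
        abs_add_le _ _
    _ ≤ (|L.W₁.mulVec (χ v) i| + |L.W₂.mulVec (∑ u ∈ G.neighbors v, χ u) i|) + |L.b i| :=
        add_le_add_left (abs_add_le _ _) _
    _ ≤ S1 * C + S2 * (p * C) + S3 := by
        gcongr

/-- Lemma 4 of the paper: for layers `L`, `K`, bounded sets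
`X_L`, `X_K`, and degree bound `p`, there are layers `L'`, `K'` with the same
activation function such that `L'` is equivalent to `L` over `𝔾_p` and `X_L`
and `K'` is equivalent to `K` over `𝔾_p` and `X_K`. -/
theorem layers_same_activation (dL rL dK rK p : ℕ)
    (L : Layer dL rL) (K : Layer dK rK)
    (XL : Set (Fin dL → ℝ)) (XK : Set (Fin dK → ℝ))
    (hXL : Bornology.IsBounded XL) (hXK : Bornology.IsBounded XK) :
    ∃ (L' : Layer dL rL) (K' : Layer dK rK),
      L'.σ = K'.σ ∧
      (∀ (G : MPGraph), G.DegreeLE p →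
        ∀ χ : Fin G.n → Fin dL → ℝ, (∀ v, χ v ∈ XL) →
          ∀ v, L'.eval G χ v = L.eval G χ v) ∧
      (∀ (G : MPGraph), G.DegreeLE p →
        ∀ χ : Fin G.n → Fin dK → ℝ, (∀ v, χ v ∈ XK) →
          ∀ v, K'.eval G χ v = K.eval G χ v) := by
  obtain ⟨ML, hMLnn, hML⟩ := layer_arg_bound L p XL hXL
  obtain ⟨MK, hMKnn, hMK⟩ := layer_arg_bound K p XK hXK
  set cL : ℝ := ML + 1 with hcL
  set cK : ℝ := -(MK + 1) with hcK
  set mid : ℝ → ℝ := fun x =>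
    ((x + 1) / 2) * L.σ (1 - cL) + ((1 - x) / 2) * K.σ (-1 - cK) with hmid
  set σ' : ℝ → ℝ := fun x =>
    if x ≤ -1 then K.σ (x - cK)
    else if (1 : ℝ) ≤ x then L.σ (x - cL) else mid x with hσ'
  have hmidcont : Continuous mid := by
    rw [hmid]
    fun_prop
  have hσcont : Continuous σ' := by
    rw [hσ']
    apply Continuous.if_le
    · exact K.hσ.comp (continuous_id.sub continuous_const)
    · apply Continuous.if_le
      · exact L.hσ.comp (continuous_id.sub continuous_const)
      · exact hmidcont
      · exact continuous_const
      · exact continuous_id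
      · intro x hx
        subst hx
        simp [hmid]
    · exact continuous_id
    · exact continuous_const
    · intro x hx
      subst hx
      rw [if_neg (by norm_num)]
      simp [hmid]
  refine ⟨⟨L.W₁, L.W₂, fun i => L.b i + cL, σ', hσcont⟩,
    ⟨K.W₁, K.W₂, fun i => K.b i + cK, σ', hσcont⟩, rfl, ?_, ?_⟩
  · intro G hG χ hχ v
    funext i
    have hb := hML G hG χ hχ v i
    set a : ℝ := L.W₁.mulVec (χ v) i + L.W₂.mulVec (∑ u ∈ G.neighbors v, χ u) i + L.b i
      with ha
    have ha1 : -ML ≤ a := neg_le_of_abs_le hb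
    show σ' (L.W₁.mulVec (χ v) i + L.W₂.mulVec (∑ u ∈ G.neighbors v, χ u) i
      + (L.b i + cL)) = L.σ a
    have harg : L.W₁.mulVec (χ v) i + L.W₂.mulVec (∑ u ∈ G.neighbors v, χ u) i
        + (L.b i + cL) = a + cL := by rw [ha]; ring
    rw [harg]
    simp only [hσ', hcL]
    rw [if_neg (not_le.mpr (by linarith)), if_pos (by linarith)]
    congr 1
    ring
  · intro G hG χ hχ v
    funext i
    have hb := hMK G hG χ hχ v i
    set a : ℝ := K.W₁.mulVec (χ v) i + K.W₂.mulVec (∑ u ∈ G.neighbors v, χ u) i + K.b i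
      with ha
    have ha1 : a ≤ MK := le_of_abs_le hb
    show σ' (K.W₁.mulVec (χ v) i + K.W₂.mulVec (∑ u ∈ G.neighbors v, χ u) i
      + (K.b i + cK)) = K.σ a
    have harg : K.W₁.mulVec (χ v) i + K.W₂.mulVec (∑ u ∈ G.neighbors v, χ u) i
        + (K.b i + cK) = a + cK := by rw [ha]; ring
    rw [harg]
    simp only [hσ', hcK]
    rw [if_pos (by linarith)]
    congr 1
    ring
end

section
/- Let L and K be MPNN layers of types d_L → r_L and d_K → r_K respectively, let X_L ⊆ ℝ^{d_L} and X_K ⊆ ℝ^{d_K} be bounded, let p be a natural number, and let X = X_L × X_K ⊆ ℝ^{d_L + d_K}. Then there exists a single MPNN layer of type (d_L + d_K) → (r_L + r_K) that is equivalent to the parallel composition L ∥ K over 𝔾_p and X. -/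
open scoped BigOperators

/-- Gluing of two activation functions: acts as `f (· - c)` on `[1, ∞)`,
as `g (· + c)` on `(-∞, -1]`, and interpolates linearly in between. -/
noncomputable def glue (f g : ℝ → ℝ) (c : ℝ) : ℝ → ℝ := fun x =>
  (1 + min 1 (max (-1) x)) / 2 * f (max x 1 - c) +
  (1 - min 1 (max (-1) x)) / 2 * g (min x (-1) + c)

lemma glue_continuous {f g : ℝ → ℝ} (hf : Continuous f) (hg : Continuous g) (c : ℝ) :
    Continuous (glue f g c) := by
  unfold glue; fun_prop

lemma glue_of_one_le {f g : ℝ → ℝ} {c x : ℝ} (h : 1 ≤ x) : glue f g c x = f (x - c) := by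
  unfold glue
  rw [max_eq_right (le_trans (by norm_num) h), min_eq_left h, max_eq_left h,
    min_eq_right (le_trans (by norm_num) h)]
  ring

lemma glue_of_le_neg_one {f g : ℝ → ℝ} {c x : ℝ} (h : x ≤ -1) : glue f g c x = g (x + c) := by
  unfold glue
  rw [max_eq_left h, min_eq_right (by norm_num : (-1:ℝ) ≤ 1), min_eq_left h,
    max_eq_right (le_trans h (by norm_num))]
  ring

lemma arg_bound {d r : ℕ} (W₁ W₂ : Matrix (Fin r) (Fin d) ℝ) (b : Fin r → ℝ) (R : ℝ)
    (hR : 0 ≤ R) (p : ℕ) :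
    ∃ M, 0 ≤ M ∧ ∀ (x s : Fin d → ℝ), (∀ j, |x j| ≤ R) → (∀ j, |s j| ≤ p * R) →
      ∀ i, |W₁.mulVec x i + W₂.mulVec s i + b i| ≤ M := by
  refine ⟨∑ i, ((∑ j, |W₁ i j|) * R + (∑ j, |W₂ i j|) * (p * R) + |b i|), by positivity, ?_⟩
  intro x s hx hs i
  have key : ∀ (A : Matrix (Fin r) (Fin d) ℝ) (y : Fin d → ℝ) (S : ℝ), (∀ j, |y j| ≤ S) →
      |A.mulVec y i| ≤ (∑ j, |A i j|) * S := by
    intro A y S hy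
    rw [Finset.sum_mul]
    refine le_trans ?_ ((Finset.abs_sum_le_sum_abs (fun j => A i j * y j) Finset.univ).trans
      (Finset.sum_le_sum fun j _ => ?_))
    · exact le_of_eq (congrArg abs rfl)
    · rw [abs_mul]; exact mul_le_mul_of_nonneg_left (hy j) (abs_nonneg _)
  calc |W₁.mulVec x i + W₂.mulVec s i + b i|
      ≤ |W₁.mulVec x i| + |W₂.mulVec s i| + |b i| := abs_add_three _ _ _
    _ ≤ (∑ j, |W₁ i j|) * R + (∑ j, |W₂ i j|) * (p * R) + |b i| := by
        gcongr <;> [exact key W₁ x R hx; exact key W₂ s (p * R) hs]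
    _ ≤ ∑ i, ((∑ j, |W₁ i j|) * R + (∑ j, |W₂ i j|) * (p * R) + |b i|) :=
        Finset.single_le_sum (f := fun i => (∑ j, |W₁ i j|) * R + (∑ j, |W₂ i j|) * (↑p * R) + |b i|) (fun i _ => by positivity) (Finset.mem_univ i)

/-- Lemma 5 of the paper: for layers `L`, `K`, bounded sets
`X_L`, `X_K`, and degree bound `p`, there is a single MPNN layer equivalent to
the parallel composition `L ∥ K` over `𝔾_p` and `X = X_L × X_K`. -/
theorem layer_parallel_bounded (dL rL dK rK p : ℕ)
    (L : Layer dL rL) (K : Layer dK rK)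
    (XL : Set (Fin dL → ℝ)) (XK : Set (Fin dK → ℝ))
    (hXL : Bornology.IsBounded XL) (hXK : Bornology.IsBounded XK) :
    ∃ J : Layer (dL + dK) (rL + rK),
      ∀ (G : MPGraph), G.DegreeLE p →
        ∀ χ : Fin G.n → Fin (dL + dK) → ℝ,
          (∀ v, (fun i => χ v (Fin.castAdd dK i)) ∈ XL ∧
                (fun i => χ v (Fin.natAdd dL i)) ∈ XK) →
          ∀ v, J.eval G χ v =
            Fin.append (L.eval G (fun w i => χ w (Fin.castAdd dK i)) v)
              (K.eval G (fun w i => χ w (Fin.natAdd dL i)) v) := by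
  obtain ⟨RL, hRL⟩ := isBounded_iff_forall_norm_le.mp hXL
  obtain ⟨RK, hRK⟩ := isBounded_iff_forall_norm_le.mp hXK
  set R : ℝ := max (max RL RK) 0 with hRdef
  have hR0 : 0 ≤ R := le_max_right _ _
  obtain ⟨ML, hML0, hML⟩ := arg_bound L.W₁ L.W₂ L.b R hR0 p
  obtain ⟨MK, hMK0, hMK⟩ := arg_bound K.W₁ K.W₂ K.b R hR0 p
  set M : ℝ := max ML MK with hMdef
  set c : ℝ := M + 2 with hc
  refine ⟨⟨Matrix.of (Fin.append (fun i => Fin.append (L.W₁ i) 0)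
            (fun i => Fin.append 0 (K.W₁ i))),
          Matrix.of (Fin.append (fun i => Fin.append (L.W₂ i) 0)
            (fun i => Fin.append 0 (K.W₂ i))),
          Fin.append (fun i => L.b i + c) (fun i => K.b i - c),
          glue L.σ K.σ c, glue_continuous L.hσ K.hσ c⟩, ?_⟩
  intro G hG χ hχ v
  set χL : Fin G.n → Fin dL → ℝ := fun w i => χ w (Fin.castAdd dK i) with hχL
  set χK : Fin G.n → Fin dK → ℝ := fun w i => χ w (Fin.natAdd dL i) with hχK
  have hxL : ∀ w j, |χL w j| ≤ R := by
    intro w j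
    refine le_trans (le_trans ?_ (hRL _ (hχ w).1)) (le_trans (le_max_left _ _) (le_max_left _ _))
    simpa [Real.norm_eq_abs] using norm_le_pi_norm (χL w) j
  have hxK : ∀ w j, |χK w j| ≤ R := by
    intro w j
    refine le_trans (le_trans ?_ (hRK _ (hχ w).2)) (le_trans (le_max_right _ _) (le_max_left _ _))
    simpa [Real.norm_eq_abs] using norm_le_pi_norm (χK w) j
  have hcard : ((G.neighbors v).card : ℝ) ≤ p := Nat.cast_le.mpr (hG v)
  have hsL : ∀ j, |(∑ u ∈ G.neighbors v, χL u) j| ≤ p * R := by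
    intro j
    rw [Finset.sum_apply]
    calc |∑ u ∈ G.neighbors v, χL u j| ≤ ∑ u ∈ G.neighbors v, |χL u j| :=
          Finset.abs_sum_le_sum_abs _ _
      _ ≤ ∑ _u ∈ G.neighbors v, R := Finset.sum_le_sum fun u _ => hxL u j
      _ = ((G.neighbors v).card : ℝ) * R := by rw [Finset.sum_const, nsmul_eq_mul]
      _ ≤ p * R := mul_le_mul_of_nonneg_right hcard hR0
  have hsK : ∀ j, |(∑ u ∈ G.neighbors v, χK u) j| ≤ p * R := by
    intro j
    rw [Finset.sum_apply]
    calc |∑ u ∈ G.neighbors v, χK u j| ≤ ∑ u ∈ G.neighbors v, |χK u j| :=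
          Finset.abs_sum_le_sum_abs _ _
      _ ≤ ∑ _u ∈ G.neighbors v, R := Finset.sum_le_sum fun u _ => hxK u j
      _ = ((G.neighbors v).card : ℝ) * R := by rw [Finset.sum_const, nsmul_eq_mul]
      _ ≤ p * R := mul_le_mul_of_nonneg_right hcard hR0
  funext i
  simp only [Layer.eval]
  refine Fin.addCases (fun i' => ?_) (fun i' => ?_) i
  · -- left block
    have e1 : (Matrix.of (Fin.append (fun i => Fin.append (L.W₁ i) 0)
          (fun i => Fin.append 0 (K.W₁ i)))).mulVec (χ v) (Fin.castAdd rK i')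
          = L.W₁.mulVec (χL v) i' := by
      simp [Matrix.mulVec, dotProduct, Fin.sum_univ_add, Fin.append_left, Fin.append_right, hχL]
    have e2 : (Matrix.of (Fin.append (fun i => Fin.append (L.W₂ i) 0)
          (fun i => Fin.append 0 (K.W₂ i)))).mulVec (∑ u ∈ G.neighbors v, χ u) (Fin.castAdd rK i')
          = L.W₂.mulVec (∑ u ∈ G.neighbors v, χL u) i' := by
      simp [Matrix.mulVec, dotProduct, Fin.sum_univ_add, Fin.append_left, Fin.append_right,
        Finset.sum_apply, hχL]
    have eb : Fin.append (fun i => L.b i + c) (fun i => K.b i - c) (Fin.castAdd rK i')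
          = L.b i' + c := Fin.append_left _ _ _
    have harg := hML (χL v) (∑ u ∈ G.neighbors v, χL u) (hxL v) hsL i'
    set a : ℝ := L.W₁.mulVec (χL v) i' + L.W₂.mulVec (∑ u ∈ G.neighbors v, χL u) i' + L.b i'
      with ha
    have habs : |a| ≤ M := le_trans harg (le_max_left _ _)
    have hge : (1:ℝ) ≤ a + c := by
      have := (abs_le.mp habs).1
      rw [hc]; linarith
    have hrewrite : (Matrix.of (Fin.append (fun i => Fin.append (L.W₁ i) 0)
          (fun i => Fin.append 0 (K.W₁ i)))).mulVec (χ v) (Fin.castAdd rK i')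
        + (Matrix.of (Fin.append (fun i => Fin.append (L.W₂ i) 0)
          (fun i => Fin.append 0 (K.W₂ i)))).mulVec (∑ u ∈ G.neighbors v, χ u) (Fin.castAdd rK i')
        + Fin.append (fun i => L.b i + c) (fun i => K.b i - c) (Fin.castAdd rK i')
        = a + c := by rw [e1, e2, eb, ha]; ring
    rw [hrewrite, glue_of_one_le hge, add_sub_cancel_right, Fin.append_left]
    rfl
  · -- right block
    have e1 : (Matrix.of (Fin.append (fun i => Fin.append (L.W₁ i) 0)
          (fun i => Fin.append 0 (K.W₁ i)))).mulVec (χ v) (Fin.natAdd rL i')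
          = K.W₁.mulVec (χK v) i' := by
      simp [Matrix.mulVec, dotProduct, Fin.sum_univ_add, Fin.append_left, Fin.append_right, hχK]
    have e2 : (Matrix.of (Fin.append (fun i => Fin.append (L.W₂ i) 0)
          (fun i => Fin.append 0 (K.W₂ i)))).mulVec (∑ u ∈ G.neighbors v, χ u) (Fin.natAdd rL i')
          = K.W₂.mulVec (∑ u ∈ G.neighbors v, χK u) i' := by
      simp [Matrix.mulVec, dotProduct, Fin.sum_univ_add, Fin.append_left, Fin.append_right,
        Finset.sum_apply, hχK]
    have eb : Fin.append (fun i => L.b i + c) (fun i => K.b i - c) (Fin.natAdd rL i')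
          = K.b i' - c := Fin.append_right _ _ _
    have harg := hMK (χK v) (∑ u ∈ G.neighbors v, χK u) (hxK v) hsK i'
    set a : ℝ := K.W₁.mulVec (χK v) i' + K.W₂.mulVec (∑ u ∈ G.neighbors v, χK u) i' + K.b i'
      with ha
    have habs : |a| ≤ M := le_trans harg (le_max_right _ _)
    have hle : a - c ≤ -1 := by
      have := (abs_le.mp habs).2
      rw [hc]; linarith
    have hrewrite : (Matrix.of (Fin.append (fun i => Fin.append (L.W₁ i) 0)
          (fun i => Fin.append 0 (K.W₁ i)))).mulVec (χ v) (Fin.natAdd rL i')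
        + (Matrix.of (Fin.append (fun i => Fin.append (L.W₂ i) 0)
          (fun i => Fin.append 0 (K.W₂ i)))).mulVec (∑ u ∈ G.neighbors v, χ u) (Fin.natAdd rL i')
        + Fin.append (fun i => L.b i + c) (fun i => K.b i - c) (Fin.natAdd rL i')
        = a - c := by rw [e1, e2, eb, ha]; ring
    rw [hrewrite, glue_of_le_neg_one hle, sub_add_cancel, Fin.append_right]
    rfl
end

section
/- Let p and d be natural numbers, let X ⊆ ℝ^d be compact, and let e be an MPLang expression appropriate for input arity d. Then the image of e over 𝔾_p and X, namely the set { e(G)(χ)(v) : G ∈ 𝔾_p, χ a d-dimensional feature map on G with image contained in X, v ∈ V(G) } ⊆ ℝ, is contained in a compact subset of ℝ. -/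
open scoped BigOperators

/-- Lemma 6 of the paper: for a degree bound `p` and a compact
set `X ⊆ ℝ^d`, the image of an MPLang expression appropriate for `d` over `𝔾_p`
and `X` is contained in a compact subset of `ℝ`. -/
theorem mplang_image_compact (p d : ℕ) (X : Set (Fin d → ℝ)) (hX : IsCompact X)
    (e : MPLang) (he : e.Appropriate d) :
    ∃ Y : Set ℝ, IsCompact Y ∧
      ∀ (G : MPGraph), G.DegreeLE p →
        ∀ χ : Fin G.n → Fin d → ℝ, (∀ v, χ v ∈ X) →
          ∀ v : Fin G.n, e.eval d G χ v ∈ Y := by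
  induction e with
  | one =>
    exact ⟨{1}, isCompact_singleton, fun _ _ _ _ _ => rfl⟩
  | proj i =>
    refine ⟨((fun x : Fin d → ℝ => if h : i - 1 < d then x ⟨i - 1, h⟩ else 0) '' X) ∪ {0},
      ((hX.image (by split_ifs with h; exacts [continuous_apply _, continuous_const])).union isCompact_singleton), ?_⟩
    intro G _ χ hχ v
    simp only [MPLang.eval]
    split
    · exact Or.inl ⟨χ v, hχ v, by simp [*]⟩
    · exact Or.inr (by simp)
  | scale a e ih =>
    obtain ⟨Y, hY, hmem⟩ := ih he
    exact ⟨(a * ·) '' Y, hY.image (by fun_prop),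
      fun G hG χ hχ v => ⟨_, hmem G hG χ hχ v, rfl⟩⟩
  | add e₁ e₂ ih₁ ih₂ =>
    obtain ⟨Y₁, hY₁, hmem₁⟩ := ih₁ he.1
    obtain ⟨Y₂, hY₂, hmem₂⟩ := ih₂ he.2
    refine ⟨(fun q : ℝ × ℝ => q.1 + q.2) '' (Y₁ ×ˢ Y₂),
      (hY₁.prod hY₂).image (continuous_fst.add continuous_snd), ?_⟩
    exact fun G hG χ hχ v =>
      ⟨(_, _), Set.mk_mem_prod (hmem₁ G hG χ hχ v) (hmem₂ G hG χ hχ v), rfl⟩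
  | app f hf e ih =>
    obtain ⟨Y, hY, hmem⟩ := ih he
    exact ⟨f '' Y, hY.image hf, fun G hG χ hχ v => ⟨_, hmem G hG χ hχ v, rfl⟩⟩
  | diamond e ih =>
    obtain ⟨Y, hY, hmem⟩ := ih he
    obtain ⟨a, ha⟩ := hY.bddBelow
    obtain ⟨b, hb⟩ := hY.bddAbove
    set M : ℝ := max |a| |b| with hM
    have hM0 : (0:ℝ) ≤ M := le_trans (abs_nonneg a) (le_max_left _ _)
    have habs : ∀ y ∈ Y, |y| ≤ M := by
      intro y hy
      rw [abs_le]
      constructor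
      · calc -M ≤ -|a| := by simp [hM]
          _ ≤ a := neg_abs_le a
          _ ≤ y := ha hy
      · calc y ≤ b := hb hy
          _ ≤ |b| := le_abs_self b
          _ ≤ M := le_max_right _ _
    refine ⟨Set.Icc (-(p * M)) (p * M), isCompact_Icc, ?_⟩
    intro G hG χ hχ v
    have hcard : (G.neighbors v).card ≤ p := hG v
    have hbound : |∑ u ∈ G.neighbors v, e.eval d G χ u| ≤ p * M := by
      calc |∑ u ∈ G.neighbors v, e.eval d G χ u|
          ≤ ∑ u ∈ G.neighbors v, |e.eval d G χ u| := Finset.abs_sum_le_sum_abs _ _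
        _ ≤ ∑ _u ∈ G.neighbors v, M :=
            Finset.sum_le_sum fun u _ => habs _ (hmem G hG χ hχ u)
        _ = (G.neighbors v).card * M := by simp [mul_comm]
        _ ≤ p * M := by
            exact mul_le_mul_of_nonneg_right (by exact_mod_cast hcard) hM0
    rw [abs_le] at hbound
    exact ⟨hbound.1, hbound.2⟩
end
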